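/- arXiv:2212.14641 — 8 statements merged into one kernel-verified Lean document; each statement's English description precedes it below -/
import Mathlib

section
/- Let M > 0, τ > 0 with τ²M² < 1, and 0 < λ < √(1 − τ²M²). Then the Volterra reservoir map F(x, z) = λ x ⊗ z̃ + 1 on the double tensor algebra is a contraction in its state variable: for all states x, y in the Hilbert space T₂(R^d) and all z ∈ R^d with ‖z‖ ≤ M, ‖F(x,z) − F(y,z)‖ ≤ (λ/√(1 − τ²M²)) ‖x − y‖, and λ/√(1 − τ²M²) < 1. -/
open scoped RealInnerProductSpace

/-- The Volterra reservoir map `F(x, z) = λ x ⊗ z̃ + 1` on the double tensor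
algebra `T₂(ℝ^d)` is a contraction in its state variable with constant
`λ/√(1 - τ²M²) < 1`.  The Hilbert space `T₂(ℝ^d)` is abstracted as a normed space `H`
equipped with a continuous bilinear tensor product `otimes` satisfying
`‖x ⊗ y‖ = ‖x‖·‖y‖`, a unit `one`, and the τ-tensorization map `tilde` satisfying
`‖z̃‖² = 1/(1 - τ²‖z‖²)` for `‖z‖ ≤ M`. -/
theorem volterra_reservoir_contraction {d : ℕ} (M τ lam : ℝ)
    (hM : 0 < M) (hτ : 0 < τ) (hτM : τ ^ 2 * M ^ 2 < 1)
    (hlam0 : 0 < lam) (hlam : lam < Real.sqrt (1 - τ ^ 2 * M ^ 2))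
    (H : Type*) [NormedAddCommGroup H] [NormedSpace ℝ H]
    (otimes : H →L[ℝ] H →L[ℝ] H) (hmult : ∀ x y : H, ‖otimes x y‖ = ‖x‖ * ‖y‖)
    (one : H) (tilde : EuclideanSpace ℝ (Fin d) → H)
    (htilde : ∀ v : EuclideanSpace ℝ (Fin d), ‖v‖ ≤ M →
      ‖tilde v‖ ^ 2 = 1 / (1 - τ ^ 2 * ‖v‖ ^ 2)) :
    (∀ (x y : H) (z : EuclideanSpace ℝ (Fin d)), ‖z‖ ≤ M →
      ‖(lam • otimes x (tilde z) + one) - (lam • otimes y (tilde z) + one)‖ ≤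
        (lam / Real.sqrt (1 - τ ^ 2 * M ^ 2)) * ‖x - y‖) ∧
      lam / Real.sqrt (1 - τ ^ 2 * M ^ 2) < 1 := by
  have hS : (0 : ℝ) < 1 - τ ^ 2 * M ^ 2 := by linarith
  have hsqrt : 0 < Real.sqrt (1 - τ ^ 2 * M ^ 2) := Real.sqrt_pos.mpr hS
  constructor
  · intro x y z hz
    have hdiff : (lam • otimes x (tilde z) + one) - (lam • otimes y (tilde z) + one)
        = lam • otimes (x - y) (tilde z) := by
      simp [map_sub, smul_sub]
    rw [hdiff, norm_smul, hmult]
    have hz2 : τ ^ 2 * ‖z‖ ^ 2 ≤ τ ^ 2 * M ^ 2 := by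
      have := pow_le_pow_left₀ (norm_nonneg z) hz 2
      nlinarith [sq_nonneg τ]
    have hden : (0 : ℝ) < 1 - τ ^ 2 * ‖z‖ ^ 2 := by linarith
    have ht2 : ‖tilde z‖ ^ 2 ≤ 1 / (1 - τ ^ 2 * M ^ 2) := by
      rw [htilde z hz]
      exact one_div_le_one_div_of_le hS (by linarith)
    have ht : ‖tilde z‖ ≤ 1 / Real.sqrt (1 - τ ^ 2 * M ^ 2) := by
      have : ‖tilde z‖ ≤ Real.sqrt (1 / (1 - τ ^ 2 * M ^ 2)) := by
        rw [← Real.sqrt_sq (norm_nonneg (tilde z))]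
        exact Real.sqrt_le_sqrt ht2
      rwa [one_div, Real.sqrt_inv, ← one_div] at this
    have := mul_le_mul_of_nonneg_left ht (mul_nonneg hlam0.le (norm_nonneg (x - y)))
    calc ‖lam‖ * (‖x - y‖ * ‖tilde z‖) = lam * ‖x - y‖ * ‖tilde z‖ := by
          rw [Real.norm_eq_abs, abs_of_pos hlam0]; ring
      _ ≤ lam * ‖x - y‖ * (1 / Real.sqrt (1 - τ ^ 2 * M ^ 2)) := this
      _ = lam / Real.sqrt (1 - τ ^ 2 * M ^ 2) * ‖x - y‖ := by ring
  · exact (div_lt_one hsqrt).mpr hlam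
end

section
/- Let M > 0, τ > 0 with τ²M² < 1, and 0 < λ < √(1 − τ²M²). The Volterra reservoir kernel K(z, z') = ⟨H(z), H(z')⟩, where H(z) is the time-0 state of the Volterra reservoir with input z, satisfies the functional recursion K(z, z') = 1 + λ² K(T₁z, T₁z') / (1 − τ² ⟨z_0, z'_0⟩) for all z, z' in K_M, where T₁ is the time-shift (T₁z)_t = z_{t−1}. -/
open scoped RealInnerProductSpace

/-- The reservoir kernel `K(z,z') = ⟨H(z), H(z')⟩` of the Volterra reservoir,
where `H(z)` is the time-0 state, satisfies the recursion
`K(z,z') = 1 + λ² K(T₁z, T₁z')/(1 - τ²⟨z₀, z'₀⟩)` on `K_M`.  Sequences are indexed by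
depth (`n` is time `-n`), so the time shift `T₁` (with `(T₁z)_t = z_{t-1}`) is
`n ↦ z (n+1)`.  The state space `T₂(ℝ^d)` is abstracted as a real inner product space `H`
with a continuous bilinear product `otimes` such that `⟨a ⊗ u, b ⊗ v⟩ = ⟨a,b⟩⟨u,v⟩`, a
unit `one` of norm one orthogonal to all products, and the τ-tensorization `tilde` with
`⟨z̃, z̃'⟩ = 1/(1 - τ²⟨z,z'⟩)`.  `H(z)` is abstracted as any functional `Hst` satisfying
the Volterra reservoir fixed-point equation `H(z) = 1 + λ H(T₁z) ⊗ z̃₀` on `K_M`. -/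
theorem volterra_kernel_recursion {d : ℕ} (M τ lam : ℝ)
    (hM : 0 < M) (hτ : 0 < τ) (hτM : τ ^ 2 * M ^ 2 < 1)
    (hlam0 : 0 < lam) (hlam : lam < Real.sqrt (1 - τ ^ 2 * M ^ 2))
    (H : Type*) [NormedAddCommGroup H] [InnerProductSpace ℝ H]
    (otimes : H →L[ℝ] H →L[ℝ] H)
    (hprod : ∀ a b u v : H, ⟪otimes a u, otimes b v⟫ = ⟪a, b⟫ * ⟪u, v⟫)
    (one : H) (hone : ⟪one, one⟫ = (1 : ℝ))
    (hcross : ∀ a u : H, ⟪one, otimes a u⟫ = (0 : ℝ))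
    (tilde : EuclideanSpace ℝ (Fin d) → H)
    (htilde : ∀ u v : EuclideanSpace ℝ (Fin d), ‖u‖ ≤ M → ‖v‖ ≤ M →
      ⟪tilde u, tilde v⟫ = 1 / (1 - τ ^ 2 * ⟪u, v⟫))
    (Hst : (ℕ → EuclideanSpace ℝ (Fin d)) → H)
    (hHst : ∀ z : ℕ → EuclideanSpace ℝ (Fin d), (∀ n, ‖z n‖ ≤ M) →
      Hst z = one + lam • otimes (Hst (fun n => z (n + 1))) (tilde (z 0))) :
    ∀ z z' : ℕ → EuclideanSpace ℝ (Fin d),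
      (∀ n, ‖z n‖ ≤ M) → (∀ n, ‖z' n‖ ≤ M) →
      ⟪Hst z, Hst z'⟫ =
        1 + lam ^ 2 * ⟪Hst (fun n => z (n + 1)), Hst (fun n => z' (n + 1))⟫ /
          (1 - τ ^ 2 * ⟪z 0, z' 0⟫) := by
  intro z z' hz hz'
  rw [hHst z hz, hHst z' hz']
  have h2 : ⟪otimes (Hst fun n => z (n + 1)) (tilde (z 0)), one⟫ = (0 : ℝ) := by
    rw [real_inner_comm]; exact hcross _ _
  rw [inner_add_left, inner_add_right, inner_add_right, hone,
    real_inner_smul_right, real_inner_smul_left, real_inner_smul_left,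
    real_inner_smul_right, hcross, h2, hprod, htilde _ _ (hz 0) (hz' 0)]
  ring
end

section
/- Under the conditions M > 0, τ²M² < 1, 0 < λ < √(1 − τ²M²), the unique bounded solution of the kernel recursion K(z, z') = 1 + λ² K(T₁z, T₁z')/(1 − τ²⟨z_0, z'_0⟩) on K_M × K_M is given by the absolutely convergent series K(z, z') = 1 + Σ_{k=1}^∞ λ^{2k} ∏_{j=0}^{k−1} 1/(1 − τ²⟨z_{−j}, z'_{−j}⟩). -/
open scoped RealInnerProductSpace

/-- The Volterra reservoir kernel in closed form:
`K(z,z') = 1 + Σ_{k≥1} λ^{2k} Π_{j=0}^{k-1} (1 - τ²⟨z_{-j}, z'_{-j}⟩)⁻¹`.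
Sequences are indexed by depth: index `j` stands for time `-j`. -/
noncomputable def volterraKernel {d : ℕ} (lam τ : ℝ)
    (z z' : ℕ → EuclideanSpace ℝ (Fin d)) : ℝ :=
  1 + ∑' k : ℕ, lam ^ (2 * k + 2) *
    ∏ j ∈ Finset.range (k + 1), (1 - τ ^ 2 * ⟪z j, z' j⟫)⁻¹

set_option maxHeartbeats 1000000 in
/-- Under `M > 0`, `τ²M² < 1`, `0 < λ < √(1-τ²M²)`, the series defining the
Volterra kernel converges absolutely on `K_M × K_M`, the kernel satisfies the recursion
`K(z,z') = 1 + λ² K(T₁z,T₁z')/(1 - τ²⟨z₀, z'₀⟩)`, it is bounded, and it is the unique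
bounded solution of that recursion on `K_M × K_M`. -/
theorem volterra_kernel_unique_bounded_solution {d : ℕ} (M τ lam : ℝ)
    (hM : 0 < M) (hτ : 0 < τ) (hτM : τ ^ 2 * M ^ 2 < 1)
    (hlam0 : 0 < lam) (hlam : lam < Real.sqrt (1 - τ ^ 2 * M ^ 2)) :
    (∀ z z' : ℕ → EuclideanSpace ℝ (Fin d), (∀ n, ‖z n‖ ≤ M) → (∀ n, ‖z' n‖ ≤ M) →
      Summable (fun k : ℕ => |lam ^ (2 * k + 2) *
        ∏ j ∈ Finset.range (k + 1), (1 - τ ^ 2 * ⟪z j, z' j⟫)⁻¹|)) ∧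
    (∀ z z' : ℕ → EuclideanSpace ℝ (Fin d), (∀ n, ‖z n‖ ≤ M) → (∀ n, ‖z' n‖ ≤ M) →
      volterraKernel lam τ z z' =
        1 + lam ^ 2 * volterraKernel lam τ (fun n => z (n + 1)) (fun n => z' (n + 1)) /
          (1 - τ ^ 2 * ⟪z 0, z' 0⟫)) ∧
    (∃ C : ℝ, ∀ z z' : ℕ → EuclideanSpace ℝ (Fin d),
      (∀ n, ‖z n‖ ≤ M) → (∀ n, ‖z' n‖ ≤ M) → |volterraKernel lam τ z z'| ≤ C) ∧
    (∀ K' : (ℕ → EuclideanSpace ℝ (Fin d)) → (ℕ → EuclideanSpace ℝ (Fin d)) → ℝ,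
      (∃ C : ℝ, ∀ z z', (∀ n, ‖z n‖ ≤ M) → (∀ n, ‖z' n‖ ≤ M) → |K' z z'| ≤ C) →
      (∀ z z', (∀ n, ‖z n‖ ≤ M) → (∀ n, ‖z' n‖ ≤ M) →
        K' z z' = 1 + lam ^ 2 * K' (fun n => z (n + 1)) (fun n => z' (n + 1)) /
          (1 - τ ^ 2 * ⟪z 0, z' 0⟫)) →
      ∀ z z', (∀ n, ‖z n‖ ≤ M) → (∀ n, ‖z' n‖ ≤ M) →
        K' z z' = volterraKernel lam τ z z') := by
  have h1 : (0:ℝ) < 1 - τ ^ 2 * M ^ 2 := by linarith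
  set B : ℝ := (1 - τ ^ 2 * M ^ 2)⁻¹ with hBdef
  have hB0 : 0 < B := inv_pos.mpr h1
  have hlam2 : lam ^ 2 < 1 - τ ^ 2 * M ^ 2 := (Real.lt_sqrt hlam0.le).mp hlam
  set r : ℝ := lam ^ 2 * B with hrdef
  have hr0 : 0 < r := by positivity
  have hr1 : r < 1 := by
    rw [hrdef, hBdef, ← div_eq_mul_inv]
    exact (div_lt_one h1).mpr hlam2
  -- factor bounds
  have hfac : ∀ (z z' : ℕ → EuclideanSpace ℝ (Fin d)),
      (∀ n, ‖z n‖ ≤ M) → (∀ n, ‖z' n‖ ≤ M) → ∀ j,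
      1 - τ ^ 2 * M ^ 2 ≤ 1 - τ ^ 2 * ⟪z j, z' j⟫ := by
    intro z z' hz hz' j
    have h2 : ⟪z j, z' j⟫ ≤ ‖z j‖ * ‖z' j‖ := real_inner_le_norm _ _
    have h3 : ‖z j‖ * ‖z' j‖ ≤ M ^ 2 := by
      nlinarith [hz j, hz' j, norm_nonneg (z j), norm_nonneg (z' j)]
    nlinarith [sq_nonneg τ]
  have hfacpos : ∀ (z z' : ℕ → EuclideanSpace ℝ (Fin d)),
      (∀ n, ‖z n‖ ≤ M) → (∀ n, ‖z' n‖ ≤ M) → ∀ j,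
      0 < 1 - τ ^ 2 * ⟪z j, z' j⟫ := fun z z' hz hz' j =>
    lt_of_lt_of_le h1 (hfac z z' hz hz' j)
  have hfacinv : ∀ (z z' : ℕ → EuclideanSpace ℝ (Fin d)),
      (∀ n, ‖z n‖ ≤ M) → (∀ n, ‖z' n‖ ≤ M) → ∀ j,
      (1 - τ ^ 2 * ⟪z j, z' j⟫)⁻¹ ≤ B :=
    fun z z' hz hz' j => inv_anti₀ h1 (hfac z z' hz hz' j)
  -- term bounds
  have htermpos : ∀ (z z' : ℕ → EuclideanSpace ℝ (Fin d)),
      (∀ n, ‖z n‖ ≤ M) → (∀ n, ‖z' n‖ ≤ M) → ∀ k : ℕ,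
      0 ≤ lam ^ (2 * k + 2) *
        ∏ j ∈ Finset.range (k + 1), (1 - τ ^ 2 * ⟪z j, z' j⟫)⁻¹ := by
    intro z z' hz hz' k
    apply mul_nonneg (by positivity)
    exact Finset.prod_nonneg fun j _ => (inv_pos.mpr (hfacpos z z' hz hz' j)).le
  have hterm : ∀ (z z' : ℕ → EuclideanSpace ℝ (Fin d)),
      (∀ n, ‖z n‖ ≤ M) → (∀ n, ‖z' n‖ ≤ M) → ∀ k : ℕ,
      |lam ^ (2 * k + 2) *
        ∏ j ∈ Finset.range (k + 1), (1 - τ ^ 2 * ⟪z j, z' j⟫)⁻¹| ≤ r ^ (k + 1) := by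
    intro z z' hz hz' k
    rw [abs_of_nonneg (htermpos z z' hz hz' k)]
    have hprod : ∏ j ∈ Finset.range (k + 1), (1 - τ ^ 2 * ⟪z j, z' j⟫)⁻¹
        ≤ ∏ _j ∈ Finset.range (k + 1), B := by
      apply Finset.prod_le_prod
      · exact fun j _ => (inv_pos.mpr (hfacpos z z' hz hz' j)).le
      · exact fun j _ => hfacinv z z' hz hz' j
    rw [Finset.prod_const, Finset.card_range] at hprod
    have h4 : lam ^ (2 * k + 2) = (lam ^ 2) ^ (k + 1) := by ring
    calc lam ^ (2 * k + 2) * ∏ j ∈ Finset.range (k + 1), (1 - τ ^ 2 * ⟪z j, z' j⟫)⁻¹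
        ≤ lam ^ (2 * k + 2) * B ^ (k + 1) := by
          apply mul_le_mul_of_nonneg_left hprod (by positivity)
      _ = r ^ (k + 1) := by rw [h4, hrdef, mul_pow]
  have hgeo : Summable (fun k : ℕ => r ^ (k + 1)) := by
    simpa [pow_succ] using (summable_geometric_of_lt_one hr0.le hr1).mul_right r
  -- (1) absolute summability
  have habs : ∀ (z z' : ℕ → EuclideanSpace ℝ (Fin d)),
      (∀ n, ‖z n‖ ≤ M) → (∀ n, ‖z' n‖ ≤ M) →
      Summable (fun k : ℕ => |lam ^ (2 * k + 2) *
        ∏ j ∈ Finset.range (k + 1), (1 - τ ^ 2 * ⟪z j, z' j⟫)⁻¹|) := by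
    intro z z' hz hz'
    exact Summable.of_nonneg_of_le (fun k => abs_nonneg _) (hterm z z' hz hz') hgeo
  have hsum : ∀ (z z' : ℕ → EuclideanSpace ℝ (Fin d)),
      (∀ n, ‖z n‖ ≤ M) → (∀ n, ‖z' n‖ ≤ M) →
      Summable (fun k : ℕ => lam ^ (2 * k + 2) *
        ∏ j ∈ Finset.range (k + 1), (1 - τ ^ 2 * ⟪z j, z' j⟫)⁻¹) :=
    fun z z' hz hz' => (habs z z' hz hz').of_abs
  -- (2) recursion
  have hrec : ∀ (z z' : ℕ → EuclideanSpace ℝ (Fin d)),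
      (∀ n, ‖z n‖ ≤ M) → (∀ n, ‖z' n‖ ≤ M) →
      volterraKernel lam τ z z' =
        1 + lam ^ 2 * volterraKernel lam τ (fun n => z (n + 1)) (fun n => z' (n + 1)) /
          (1 - τ ^ 2 * ⟪z 0, z' 0⟫) := by
    intro z z' hz hz'
    have hc0 : (0:ℝ) < 1 - τ ^ 2 * ⟪z 0, z' 0⟫ := hfacpos z z' hz hz' 0
    unfold volterraKernel
    rw [Summable.tsum_eq_zero_add (hsum z z' hz hz')]
    have hstep : ∀ k : ℕ, lam ^ (2 * (k + 1) + 2) *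
        ∏ j ∈ Finset.range (k + 1 + 1), (1 - τ ^ 2 * ⟪z j, z' j⟫)⁻¹ =
        (lam ^ 2 * (1 - τ ^ 2 * ⟪z 0, z' 0⟫)⁻¹) *
        (lam ^ (2 * k + 2) *
          ∏ j ∈ Finset.range (k + 1), (1 - τ ^ 2 * ⟪z (j + 1), z' (j + 1)⟫)⁻¹) := by
      intro k
      rw [Finset.prod_range_succ' (fun j => (1 - τ ^ 2 * ⟪z j, z' j⟫)⁻¹) (k + 1)]
      ring
    rw [tsum_congr hstep, tsum_mul_left]
    rw [div_eq_mul_inv]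
    have h0 : lam ^ (2 * 0 + 2) *
        ∏ j ∈ Finset.range (0 + 1), (1 - τ ^ 2 * ⟪z j, z' j⟫)⁻¹ =
        lam ^ 2 * (1 - τ ^ 2 * ⟪z 0, z' 0⟫)⁻¹ := by
      simp
    rw [h0]
    ring
  -- (3) boundedness
  set CK : ℝ := 1 + ∑' k : ℕ, r ^ (k + 1) with hCK
  have hCK0 : 0 ≤ CK := by
    have : 0 ≤ ∑' k : ℕ, r ^ (k + 1) := tsum_nonneg fun k => by positivity
    linarith
  have hbound : ∀ (z z' : ℕ → EuclideanSpace ℝ (Fin d)),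
      (∀ n, ‖z n‖ ≤ M) → (∀ n, ‖z' n‖ ≤ M) → |volterraKernel lam τ z z'| ≤ CK := by
    intro z z' hz hz'
    unfold volterraKernel
    calc |1 + ∑' k : ℕ, lam ^ (2 * k + 2) *
          ∏ j ∈ Finset.range (k + 1), (1 - τ ^ 2 * ⟪z j, z' j⟫)⁻¹|
        ≤ |(1:ℝ)| + |∑' k : ℕ, lam ^ (2 * k + 2) *
          ∏ j ∈ Finset.range (k + 1), (1 - τ ^ 2 * ⟪z j, z' j⟫)⁻¹| := abs_add_le _ _
      _ ≤ 1 + ∑' k : ℕ, r ^ (k + 1) := by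
          rw [abs_one]
          gcongr
          have hs := hsum z z' hz hz'
          have ha := habs z z' hz hz'
          have habs_tsum : |∑' k : ℕ, lam ^ (2 * k + 2) *
                ∏ j ∈ Finset.range (k + 1), (1 - τ ^ 2 * ⟪z j, z' j⟫)⁻¹|
              ≤ ∑' k : ℕ, |lam ^ (2 * k + 2) *
                ∏ j ∈ Finset.range (k + 1), (1 - τ ^ 2 * ⟪z j, z' j⟫)⁻¹| := by
            rw [abs_le]
            constructor
            · rw [← tsum_neg]
              exact Summable.tsum_le_tsum (fun k => neg_abs_le _) ha.neg hs
            · exact Summable.tsum_le_tsum (fun k => le_abs_self _) hs ha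
          exact le_trans habs_tsum
            (Summable.tsum_le_tsum (hterm z z' hz hz') ha hgeo)
  refine ⟨habs, hrec, ⟨CK, hbound⟩, ?_⟩
  -- (4) uniqueness
  rintro K' ⟨C, hC⟩ hK'rec z z' hz hz'
  have hC0 : 0 ≤ C := le_trans (abs_nonneg _)
    (hC (fun _ => 0) (fun _ => 0) (fun n => by simpa using hM.le)
      (fun n => by simpa using hM.le))
  have key : ∀ n : ℕ, ∀ (z z' : ℕ → EuclideanSpace ℝ (Fin d)),
      (∀ m, ‖z m‖ ≤ M) → (∀ m, ‖z' m‖ ≤ M) →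
      |K' z z' - volterraKernel lam τ z z'| ≤ (C + CK) * r ^ n := by
    intro n
    induction n with
    | zero =>
      intro z z' hz hz'
      simp only [pow_zero, mul_one]
      calc |K' z z' - volterraKernel lam τ z z'|
          ≤ |K' z z'| + |volterraKernel lam τ z z'| := abs_sub _ _
        _ ≤ C + CK := add_le_add (hC z z' hz hz') (hbound z z' hz hz')
    | succ n ih =>
      intro z z' hz hz'
      have hzT : ∀ m, ‖z (m + 1)‖ ≤ M := fun m => hz (m + 1)
      have hz'T : ∀ m, ‖z' (m + 1)‖ ≤ M := fun m => hz' (m + 1)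
      have hc0 : (0:ℝ) < 1 - τ ^ 2 * ⟪z 0, z' 0⟫ := hfacpos z z' hz hz' 0
      have hceq : K' z z' - volterraKernel lam τ z z' =
          lam ^ 2 * (K' (fun m => z (m + 1)) (fun m => z' (m + 1)) -
            volterraKernel lam τ (fun m => z (m + 1)) (fun m => z' (m + 1))) *
            (1 - τ ^ 2 * ⟪z 0, z' 0⟫)⁻¹ := by
        rw [hK'rec z z' hz hz', hrec z z' hz hz']
        field_simp
        ring
      rw [hceq, abs_mul, abs_mul]
      have habs1 : |lam ^ 2| = lam ^ 2 := abs_of_pos (by positivity)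
      have habs2 : |(1 - τ ^ 2 * ⟪z 0, z' 0⟫)⁻¹| ≤ B := by
        rw [abs_of_pos (inv_pos.mpr hc0)]
        exact hfacinv z z' hz hz' 0
      have hih := ih (fun m => z (m + 1)) (fun m => z' (m + 1)) hzT hz'T
      calc |lam ^ 2| * |K' (fun m => z (m + 1)) (fun m => z' (m + 1)) -
              volterraKernel lam τ (fun m => z (m + 1)) (fun m => z' (m + 1))| *
              |(1 - τ ^ 2 * ⟪z 0, z' 0⟫)⁻¹|
          ≤ lam ^ 2 * ((C + CK) * r ^ n) * B := by
            rw [habs1]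
            apply mul_le_mul _ habs2 (abs_nonneg _)
              (mul_nonneg (by positivity)
                (mul_nonneg (by linarith) (pow_nonneg hr0.le n)))
            exact mul_le_mul_of_nonneg_left hih (by positivity)
        _ = (C + CK) * r ^ (n + 1) := by rw [hrdef]; ring
  have htend : Filter.Tendsto (fun n : ℕ => (C + CK) * r ^ n) Filter.atTop (nhds 0) := by
    have := (tendsto_pow_atTop_nhds_zero_of_lt_one hr0.le hr1).const_mul (C + CK)
    simpa using this
  have hle : |K' z z' - volterraKernel lam τ z z'| ≤ 0 :=
    ge_of_tendsto' htend (fun n => key n z z' hz hz')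
  have h0 := abs_eq_zero.mp (le_antisymm hle (abs_nonneg _))
  linarith
end

section
/- Let M > 0, τ²M² < 1, 0 < λ < √(1 − τ²M²). The Volterra kernel K(z, z') = 1 + Σ_{k=1}^∞ λ^{2k} ∏_{j=0}^{k−1} (1 − τ²⟨z_{−j}, z'_{−j}⟩)^{−1} is a symmetric positive semidefinite kernel on K_M: for any n ∈ N, a_1, …, a_n ∈ R and z^1, …, z^n ∈ K_M, Σ_{i,j} a_i a_j K(z^i, z^j) ≥ 0. -/
open scoped RealInnerProductSpace

/-- A kernel on `Fin n` is a *finite Gram kernel* if it is the Gram matrix of a family of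
vectors in some finite-dimensional real space. -/
def IsGram {n : ℕ} (B : Fin n → Fin n → ℝ) : Prop :=
  ∃ (ι : Type) (_ : Fintype ι) (v : Fin n → ι → ℝ), ∀ i j, B i j = ∑ x, v i x * v j x

lemma isGram_one {n : ℕ} : IsGram (fun (_ _ : Fin n) => (1 : ℝ)) :=
  ⟨Unit, inferInstance, fun _ _ => 1, by simp⟩

lemma isGram_zero {n : ℕ} : IsGram (fun (_ _ : Fin n) => (0 : ℝ)) :=
  ⟨Unit, inferInstance, fun _ _ => 0, by simp⟩

lemma IsGram.mul {n : ℕ} {B C : Fin n → Fin n → ℝ} (hB : IsGram B) (hC : IsGram C) :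
    IsGram (fun i j => B i j * C i j) := by
  obtain ⟨ι₁, _, v, hv⟩ := hB
  obtain ⟨ι₂, _, w, hw⟩ := hC
  refine ⟨ι₁ × ι₂, inferInstance, fun i p => v i p.1 * w i p.2, fun i j => ?_⟩
  dsimp only
  rw [hv, hw, Fintype.sum_prod_type, Finset.sum_mul_sum]
  exact Finset.sum_congr rfl fun x _ => Finset.sum_congr rfl fun y _ => by ring

lemma IsGram.add {n : ℕ} {B C : Fin n → Fin n → ℝ} (hB : IsGram B) (hC : IsGram C) :
    IsGram (fun i j => B i j + C i j) := by
  obtain ⟨ι₁, _, v, hv⟩ := hB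
  obtain ⟨ι₂, _, w, hw⟩ := hC
  refine ⟨ι₁ ⊕ ι₂, inferInstance, fun i => Sum.elim (v i) (w i), fun i j => ?_⟩
  dsimp only
  rw [hv, hw, Fintype.sum_sum_type]
  simp

lemma IsGram.smul {n : ℕ} {B : Fin n → Fin n → ℝ} (hB : IsGram B) {c : ℝ} (hc : 0 ≤ c) :
    IsGram (fun i j => c * B i j) := by
  obtain ⟨ι, _, v, hv⟩ := hB
  refine ⟨ι, inferInstance, fun i x => Real.sqrt c * v i x, fun i j => ?_⟩
  dsimp only
  rw [hv, Finset.mul_sum]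
  refine Finset.sum_congr rfl fun x _ => ?_
  have h : Real.sqrt c * Real.sqrt c = c := Real.mul_self_sqrt hc
  calc c * (v i x * v j x) = (Real.sqrt c * Real.sqrt c) * (v i x * v j x) := by rw [h]
    _ = (Real.sqrt c * v i x) * (Real.sqrt c * v j x) := by ring

lemma IsGram.pow {n : ℕ} {B : Fin n → Fin n → ℝ} (hB : IsGram B) (m : ℕ) :
    IsGram (fun i j => (B i j) ^ m) := by
  induction m with
  | zero => simpa using isGram_one
  | succ m ih =>
      have := ih.mul hB
      simpa [pow_succ] using this

lemma isGram_sum {n : ℕ} {α : Type*} (s : Finset α) (F : α → Fin n → Fin n → ℝ)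
    (h : ∀ a ∈ s, IsGram (F a)) : IsGram (fun i j => ∑ a ∈ s, F a i j) := by
  classical
  revert h
  refine Finset.induction_on s (fun _ => by simpa using isGram_zero) ?_
  intro x t hx ih h
  have h1 : IsGram (F x) := h x (Finset.mem_insert_self _ _)
  have h2 : IsGram (fun i j => ∑ a ∈ t, F a i j) :=
    ih fun a ha => h a (Finset.mem_insert_of_mem ha)
  simpa [Finset.sum_insert hx] using h1.add h2

lemma isGram_prod {n : ℕ} {α : Type*} (s : Finset α) (F : α → Fin n → Fin n → ℝ)
    (h : ∀ a ∈ s, IsGram (F a)) : IsGram (fun i j => ∏ a ∈ s, F a i j) := by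
  classical
  revert h
  refine Finset.induction_on s (fun _ => by simpa using isGram_one) ?_
  intro x t hx ih h
  have h1 : IsGram (F x) := h x (Finset.mem_insert_self _ _)
  have h2 : IsGram (fun i j => ∏ a ∈ t, F a i j) :=
    ih fun a ha => h a (Finset.mem_insert_of_mem ha)
  simpa [Finset.prod_insert hx] using h1.mul h2

lemma isGram_inner {n d : ℕ} (w : Fin n → EuclideanSpace ℝ (Fin d)) :
    IsGram (fun i j => ⟪w i, w j⟫) := by
  refine ⟨Fin d, inferInstance, fun i => (w i : Fin d → ℝ), fun i j => ?_⟩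
  dsimp only
  rw [PiLp.inner_apply]
  simp [RCLike.inner_apply, mul_comm]

lemma IsGram.qf_nonneg {n : ℕ} {B : Fin n → Fin n → ℝ} (hB : IsGram B) (a : Fin n → ℝ) :
    0 ≤ ∑ i, ∑ j, a i * a j * B i j := by
  obtain ⟨ι, _, v, hv⟩ := hB
  have key : ∑ i, ∑ j, a i * a j * B i j = ∑ x, (∑ i, a i * v i x) ^ 2 := by
    have h1 : ∀ i : Fin n, ∑ j, a i * a j * B i j
        = ∑ x, ∑ j, (a i * v i x) * (a j * v j x) := by
      intro i
      rw [Finset.sum_comm]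
      refine Finset.sum_congr rfl fun j _ => ?_
      rw [hv, Finset.mul_sum]
      exact Finset.sum_congr rfl fun x _ => by ring
    calc ∑ i, ∑ j, a i * a j * B i j
        = ∑ i, ∑ x, ∑ j, (a i * v i x) * (a j * v j x) := Finset.sum_congr rfl fun i _ => h1 i
      _ = ∑ x, ∑ i, ∑ j, (a i * v i x) * (a j * v j x) := Finset.sum_comm
      _ = ∑ x, (∑ i, a i * v i x) ^ 2 := by
          refine Finset.sum_congr rfl fun x _ => ?_
          rw [sq, Finset.sum_mul_sum]
  rw [key]
  exact Finset.sum_nonneg fun x _ => sq_nonneg _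

lemma volterra_prod_qf_nonneg {d n : ℕ} (M τ : ℝ) (hτM : τ ^ 2 * M ^ 2 < 1)
    (zs : Fin n → (ℕ → EuclideanSpace ℝ (Fin d))) (hzs : ∀ i k, ‖zs i k‖ ≤ M)
    (a : Fin n → ℝ) (k : ℕ) :
    0 ≤ ∑ i, ∑ j, a i * a j *
      ∏ l ∈ Finset.range (k + 1), (1 - τ ^ 2 * ⟪zs i l, zs j l⟫)⁻¹ := by
  have habs : ∀ (i j : Fin n) (l : ℕ), |τ ^ 2 * ⟪zs i l, zs j l⟫| < 1 := by
    intro i j l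
    have h1 : |⟪zs i l, zs j l⟫| ≤ ‖zs i l‖ * ‖zs j l‖ := abs_real_inner_le_norm _ _
    have h2 : ‖zs i l‖ * ‖zs j l‖ ≤ M * M :=
      mul_le_mul (hzs i l) (hzs j l) (norm_nonneg _) ((norm_nonneg _).trans (hzs i l))
    have h3 : |τ ^ 2 * ⟪zs i l, zs j l⟫| ≤ τ ^ 2 * M ^ 2 := by
      rw [abs_mul, abs_of_nonneg (sq_nonneg τ)]
      have := h1.trans h2
      nlinarith [sq_nonneg τ]
    linarith
  set s : ℕ → Fin n → Fin n → ℝ := fun N i j =>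
    ∏ l ∈ Finset.range (k + 1), ∑ m ∈ Finset.range N, (τ ^ 2 * ⟪zs i l, zs j l⟫) ^ m with hs
  have hGram : ∀ N, IsGram (s N) := by
    intro N
    refine isGram_prod _ _ fun l _ => isGram_sum _ _ fun m _ => ?_
    have hg : IsGram (fun i j => (τ ^ 2) ^ m * (⟪zs i l, zs j l⟫) ^ m) :=
      (IsGram.pow (isGram_inner (fun i => zs i l)) m).smul (pow_nonneg (sq_nonneg τ) m)
    simpa [mul_pow] using hg
  have htend : Filter.Tendsto (fun N => ∑ i, ∑ j, a i * a j * s N i j) Filter.atTop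
      (nhds (∑ i, ∑ j, a i * a j *
        ∏ l ∈ Finset.range (k + 1), (1 - τ ^ 2 * ⟪zs i l, zs j l⟫)⁻¹)) := by
    refine tendsto_finset_sum _ fun i _ => tendsto_finset_sum _ fun j _ => ?_
    refine Filter.Tendsto.const_mul _ ?_
    refine tendsto_finset_prod _ fun l _ => ?_
    exact (hasSum_geometric_of_abs_lt_one (habs i j l)).tendsto_sum_nat
  exact ge_of_tendsto' htend fun N => (hGram N).qf_nonneg a

/-- Under `M > 0`, `τ²M² < 1`, `0 < λ < √(1-τ²M²)`, the Volterra kernel is a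
symmetric positive semidefinite kernel on `K_M`: for all `a_1,…,a_n ∈ ℝ` and
`z^1,…,z^n ∈ K_M`, `Σ_{i,j} a_i a_j K(z^i, z^j) ≥ 0`. -/
theorem volterra_kernel_pos_semidef {d : ℕ} (M τ lam : ℝ)
    (hM : 0 < M) (hτ : 0 < τ) (hτM : τ ^ 2 * M ^ 2 < 1)
    (hlam0 : 0 < lam) (hlam : lam < Real.sqrt (1 - τ ^ 2 * M ^ 2)) :
    (∀ z z' : ℕ → EuclideanSpace ℝ (Fin d), (∀ n, ‖z n‖ ≤ M) → (∀ n, ‖z' n‖ ≤ M) →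
      volterraKernel lam τ z z' = volterraKernel lam τ z' z) ∧
    (∀ (n : ℕ) (a : Fin n → ℝ) (zs : Fin n → (ℕ → EuclideanSpace ℝ (Fin d))),
      (∀ i k, ‖zs i k‖ ≤ M) →
      0 ≤ ∑ i, ∑ j, a i * a j * volterraKernel lam τ (zs i) (zs j)) := by
  have hc1 : (0:ℝ) < 1 - τ ^ 2 * M ^ 2 := by linarith
  have hlam_sq : lam ^ 2 < 1 - τ ^ 2 * M ^ 2 := by
    have h := Real.sq_sqrt hc1.le
    nlinarith [Real.sqrt_nonneg (1 - τ ^ 2 * M ^ 2)]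
  constructor
  · intro z z' _ _
    unfold volterraKernel
    congr 1
    refine tsum_congr fun k => ?_
    congr 1
    exact Finset.prod_congr rfl fun l _ => by rw [real_inner_comm]
  · intro n a zs hzs
    have hfac : ∀ (i j : Fin n) (l : ℕ),
        1 - τ ^ 2 * M ^ 2 ≤ 1 - τ ^ 2 * ⟪zs i l, zs j l⟫ := by
      intro i j l
      have h1 : |⟪zs i l, zs j l⟫| ≤ ‖zs i l‖ * ‖zs j l‖ := abs_real_inner_le_norm _ _
      have h2 : ‖zs i l‖ * ‖zs j l‖ ≤ M * M :=
        mul_le_mul (hzs i l) (hzs j l) (norm_nonneg _) ((norm_nonneg _).trans (hzs i l))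
      have h3 : ⟪zs i l, zs j l⟫ ≤ M ^ 2 := by
        have := (le_abs_self _).trans (h1.trans h2); nlinarith
      nlinarith [sq_nonneg τ]
    have hfacpos : ∀ (i j : Fin n) (l : ℕ), 0 < 1 - τ ^ 2 * ⟪zs i l, zs j l⟫ :=
      fun i j l => lt_of_lt_of_le hc1 (hfac i j l)
    set f : Fin n → Fin n → ℕ → ℝ := fun i j k =>
      lam ^ (2 * k + 2) * ∏ l ∈ Finset.range (k + 1), (1 - τ ^ 2 * ⟪zs i l, zs j l⟫)⁻¹
      with hf
    have hf_nonneg : ∀ i j k, 0 ≤ f i j k := by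
      intro i j k
      refine mul_nonneg (pow_nonneg hlam0.le _) (Finset.prod_nonneg fun l _ => ?_)
      exact (inv_pos.mpr (hfacpos i j l)).le
    set r : ℝ := lam ^ 2 * (1 - τ ^ 2 * M ^ 2)⁻¹ with hr
    have hr0 : 0 ≤ r := mul_nonneg (sq_nonneg _) (inv_pos.mpr hc1).le
    have hr1 : r < 1 := by
      rw [hr, mul_inv_lt_iff₀ hc1]
      linarith
    have hf_le : ∀ i j k, f i j k ≤ r ^ (k + 1) := by
      intro i j k
      have hprod : ∏ l ∈ Finset.range (k + 1), (1 - τ ^ 2 * ⟪zs i l, zs j l⟫)⁻¹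
          ≤ ((1 - τ ^ 2 * M ^ 2)⁻¹) ^ (k + 1) := by
        have hconst : ((1 - τ ^ 2 * M ^ 2)⁻¹) ^ (k + 1)
            = ∏ _l ∈ Finset.range (k + 1), (1 - τ ^ 2 * M ^ 2)⁻¹ := by
          rw [Finset.prod_const, Finset.card_range]
        rw [hconst]
        refine Finset.prod_le_prod (fun l _ => (inv_pos.mpr (hfacpos i j l)).le)
          (fun l _ => inv_anti₀ hc1 (hfac i j l))
      calc f i j k ≤ lam ^ (2 * k + 2) * ((1 - τ ^ 2 * M ^ 2)⁻¹) ^ (k + 1) :=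
            mul_le_mul_of_nonneg_left hprod (pow_nonneg hlam0.le _)
        _ = r ^ (k + 1) := by rw [hr, mul_pow, ← pow_mul]; ring_nf
    have hsummable : ∀ i j, Summable (f i j) := by
      intro i j
      refine Summable.of_nonneg_of_le (hf_nonneg i j) (hf_le i j) ?_
      simpa [pow_succ'] using (summable_geometric_of_lt_one hr0 hr1).mul_left r
    have hker : ∀ i j, volterraKernel lam τ (zs i) (zs j) = 1 + ∑' k, f i j k := fun i j => rfl
    have hswap : ∑' k, ∑ i, ∑ j, a i * a j * f i j k
        = ∑ i, ∑ j, ∑' k, a i * a j * f i j k := by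
      rw [Summable.tsum_finsetSum fun i _ => summable_sum fun j _ => ((hsummable i j).mul_left (a i * a j))]
      exact Finset.sum_congr rfl fun i _ =>
        Summable.tsum_finsetSum fun j _ => (hsummable i j).mul_left (a i * a j)
    have hsplit : ∑ i, ∑ j, a i * a j * volterraKernel lam τ (zs i) (zs j)
        = (∑ i, a i) ^ 2 + ∑' k, ∑ i, ∑ j, a i * a j * f i j k := by
      have step1 : ∑ i, ∑ j, a i * a j * volterraKernel lam τ (zs i) (zs j)
          = ∑ i, ∑ j, (a i * a j + ∑' k, a i * a j * f i j k) := by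
        refine Finset.sum_congr rfl fun i _ => Finset.sum_congr rfl fun j _ => ?_
        rw [hker, mul_add, mul_one, tsum_mul_left]
      rw [step1]
      have step2 : ∑ i, ∑ j, (a i * a j + ∑' k, a i * a j * f i j k)
          = (∑ i, ∑ j, a i * a j) + ∑ i, ∑ j, ∑' k, a i * a j * f i j k := by
        rw [← Finset.sum_add_distrib]
        exact Finset.sum_congr rfl fun i _ => Finset.sum_add_distrib
      rw [step2, ← hswap, sq, Finset.sum_mul_sum]
    rw [hsplit]
    have hterm : ∀ k : ℕ, 0 ≤ ∑ i, ∑ j, a i * a j * f i j k := by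
      intro k
      have heq : ∑ i, ∑ j, a i * a j * f i j k
          = lam ^ (2 * k + 2) * ∑ i, ∑ j, a i * a j *
            ∏ l ∈ Finset.range (k + 1), (1 - τ ^ 2 * ⟪zs i l, zs j l⟫)⁻¹ := by
        rw [Finset.mul_sum]
        refine Finset.sum_congr rfl fun i _ => ?_
        rw [Finset.mul_sum]
        exact Finset.sum_congr rfl fun j _ => by rw [hf]; ring
      rw [heq]
      exact mul_nonneg (pow_nonneg hlam0.le _)
        (volterra_prod_qf_nonneg M τ hτM zs hzs a k)
    have h1 : (0:ℝ) ≤ (∑ i, a i) ^ 2 := sq_nonneg _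
    have h2 : (0:ℝ) ≤ ∑' k, ∑ i, ∑ j, a i * a j * f i j k := tsum_nonneg hterm
    linarith
end

section
/- (Representer theorem in this setting.) Under the hypotheses of the previous statement, if the regularized empirical risk R attains its minimum over X, then it attains its minimum at a point of the form Ŵ = Σ_{i=0}^{n−1} α_i H(Z^{-n+1}_{-i}) for some α_0, …, α_{n−1} ∈ R; consequently the minimization reduces to minimizing over α ∈ R^n the expression (1/n) Σ_{i=1}^n L((Kα)_i, Y_{−(n−i)}) + Ω(α^⊤Kα), where K is the Gram matrix K_{ij} = ⟨H(Z^{-n+1}_{-(n−i)}), H(Z^{-n+1}_{-(n−j)})⟩. -/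
open scoped RealInnerProductSpace
open Matrix

/-- The regularized empirical risk
`R(W) = (1/n) Σᵢ L(⟨W, H(Z₋ᵢ)⟩, Yᵢ) + Ω(‖W‖²)`, where `v i = H(Z^{-n+1}_{-(n-i)})` are the
feature vectors of the truncated input samples and `Y i = Y_{-(n-i)}`. -/
noncomputable def regRisk {X : Type*} [NormedAddCommGroup X] [InnerProductSpace ℝ X]
    {n : ℕ} (v : Fin n → X) (Y : Fin n → ℝ) (L : ℝ → ℝ → ℝ) (Om : ℝ → ℝ) (W : X) : ℝ :=
  (1 / (n : ℝ)) * ∑ i, L ⟪W, v i⟫ (Y i) + Om (‖W‖ ^ 2)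

/-- The Gram matrix `K_{ij} = ⟨H(Z^{-n+1}_{-(n-i)}), H(Z^{-n+1}_{-(n-j)})⟩`. -/
noncomputable def gramMat {X : Type*} [NormedAddCommGroup X] [InnerProductSpace ℝ X]
    {n : ℕ} (v : Fin n → X) : Matrix (Fin n) (Fin n) ℝ :=
  Matrix.of fun i j => ⟪v i, v j⟫

/-- Representer theorem.  If the regularized empirical risk attains its
minimum over the Hilbert space `X`, then it attains it at a point of the form
`Ŵ = Σᵢ αᵢ H(Z^{-n+1}_{-i})`; moreover, with `K` the Gram matrix of the features, the
value of the risk at `Σᵢ βᵢ vᵢ` is `(1/n) Σᵢ L((Kβ)ᵢ, Yᵢ) + Ω(βᵀKβ)`, and the vector `α`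
minimizes this expression over `ℝⁿ`, so the minimization reduces to the Gram matrix. -/
theorem representer_theorem
    (X : Type*) [NormedAddCommGroup X] [InnerProductSpace ℝ X] [CompleteSpace X]
    (n : ℕ) (v : Fin n → X) (Y : Fin n → ℝ) (L : ℝ → ℝ → ℝ)
    (Om : ℝ → ℝ) (hOm : StrictMonoOn Om (Set.Ici 0))
    (hmin : ∃ W₀ : X, ∀ W : X, regRisk v Y L Om W₀ ≤ regRisk v Y L Om W) :
    ∃ α : Fin n → ℝ,
      (∀ W : X, regRisk v Y L Om (∑ i, α i • v i) ≤ regRisk v Y L Om W) ∧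
      (∀ β : Fin n → ℝ,
        regRisk v Y L Om (∑ i, β i • v i) =
          (1 / (n : ℝ)) * ∑ i, L ((gramMat v).mulVec β i) (Y i) +
            Om (β ⬝ᵥ (gramMat v).mulVec β)) ∧
      (∀ β : Fin n → ℝ,
        (1 / (n : ℝ)) * ∑ i, L ((gramMat v).mulVec α i) (Y i) +
            Om (α ⬝ᵥ (gramMat v).mulVec α) ≤
          (1 / (n : ℝ)) * ∑ i, L ((gramMat v).mulVec β i) (Y i) +
            Om (β ⬝ᵥ (gramMat v).mulVec β)) := by
  classical
  obtain ⟨W₀, hW₀⟩ := hmin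
  set S : Submodule ℝ X := Submodule.span ℝ (Set.range v) with hS
  haveI : FiniteDimensional ℝ S := FiniteDimensional.span_of_finite ℝ (Set.finite_range v)
  set P : X := (Submodule.orthogonalProjection S W₀ : X) with hP
  have hPmem : P ∈ S := (Submodule.orthogonalProjection S W₀).2
  obtain ⟨α, hα⟩ := (Submodule.mem_span_range_iff_exists_fun ℝ).mp hPmem
  -- inner products with the features are preserved by projection
  have hinner : ∀ i, ⟪P, v i⟫ = ⟪W₀, v i⟫ := by
    intro i
    have h := Submodule.starProjection_inner_eq_zero W₀ (v i)
      (show v i ∈ S from Submodule.subset_span ⟨i, rfl⟩)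
    rw [inner_sub_left, sub_eq_zero] at h
    exact h.symm
  -- the projection does not increase the norm
  have hnorm : ‖P‖ ≤ ‖W₀‖ := by
    calc ‖P‖ ≤ ‖(Submodule.orthogonalProjection S : X →L[ℝ] S)‖ * ‖W₀‖ :=
          (Submodule.orthogonalProjection S).le_opNorm W₀
      _ ≤ 1 * ‖W₀‖ :=
          mul_le_mul_of_nonneg_right (Submodule.orthogonalProjection_norm_le S) (norm_nonneg W₀)
      _ = ‖W₀‖ := one_mul _
  -- projection does not increase the risk
  have hrisk : regRisk v Y L Om P ≤ regRisk v Y L Om W₀ := by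
    unfold regRisk
    gcongr ?_ + ?_
    · simp only [hinner]; exact le_rfl
    · exact hOm.monotoneOn (Set.mem_Ici.2 (sq_nonneg _)) (Set.mem_Ici.2 (sq_nonneg _))
        (pow_le_pow_left₀ (norm_nonneg _) hnorm 2)
  refine ⟨α, ?_, ?_, ?_⟩
  case _ =>
    intro W
    rw [hα]
    exact le_trans hrisk (hW₀ W)
  case _ =>
    intro β
    have key : ∀ i, ⟪∑ j, β j • v j, v i⟫ = (gramMat v).mulVec β i := by
      intro i
      rw [sum_inner]
      simp only [real_inner_smul_left]
      rw [Matrix.mulVec]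
      simp only [dotProduct, gramMat, Matrix.of_apply]
      refine Finset.sum_congr rfl fun j _ => ?_
      rw [real_inner_comm, mul_comm]
    have key2 : ‖∑ i, β i • v i‖ ^ 2 = β ⬝ᵥ (gramMat v).mulVec β := by
      rw [← real_inner_self_eq_norm_sq]
      rw [sum_inner]
      simp only [real_inner_smul_left]
      rw [dotProduct]
      exact Finset.sum_congr rfl fun i _ => by rw [real_inner_comm, key i]
    unfold regRisk
    rw [key2]
    congr 1
    congr 1
    exact Finset.sum_congr rfl fun i _ => by rw [key i]
  case _ =>
    intro β
    have h2 : ∀ γ : Fin n → ℝ,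
        regRisk v Y L Om (∑ i, γ i • v i) =
          (1 / (n : ℝ)) * ∑ i, L ((gramMat v).mulVec γ i) (Y i) +
            Om (γ ⬝ᵥ (gramMat v).mulVec γ) := by
      intro γ
      have key : ∀ i, ⟪∑ j, γ j • v j, v i⟫ = (gramMat v).mulVec γ i := by
        intro i
        rw [sum_inner]
        simp only [real_inner_smul_left]
        rw [Matrix.mulVec]
        simp only [dotProduct, gramMat, Matrix.of_apply]
        refine Finset.sum_congr rfl fun j _ => ?_
        rw [real_inner_comm, mul_comm]
      have key2 : ‖∑ i, γ i • v i‖ ^ 2 = γ ⬝ᵥ (gramMat v).mulVec γ := by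
        rw [← real_inner_self_eq_norm_sq]
        rw [sum_inner]
        simp only [real_inner_smul_left]
        rw [dotProduct]
        exact Finset.sum_congr rfl fun i _ => by rw [real_inner_comm, key i]
      unfold regRisk
      rw [key2]
      congr 1
      congr 1
      exact Finset.sum_congr rfl fun i _ => by rw [key i]
    rw [← h2 α, ← h2 β, hα]
    exact le_trans hrisk (hW₀ _)
end

section
/- For d = 1, M > 0, τ²M² < 1, 0 < λ < √(1 − τ²M²), the Volterra kernel admits the feature expansion K(z, z') = 1 + Σ_j Σ_{i_0, …, i_j ≥ 0} φ_{j, i_0, …, i_j}(z) φ_{j, i_0, …, i_j}(z') for all z, z' ∈ K_M, where φ_{j, i_0, …, i_j}(z) = λ^{j+1} τ^{i_0 + ⋯ + i_j} z_0^{i_0} ⋯ z_{−j}^{i_j} and the multi-series converges absolutely. -/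
/-- The feature functions of the one-dimensional (`d = 1`) Volterra kernel (index `k`
stands for time `-k`). -/
noncomputable def volterraFeature (lam τ : ℝ) (j : ℕ) (i : Fin (j + 1) → ℕ)
    (z : ℕ → ℝ) : ℝ :=
  lam ^ (j + 1) * τ ^ (∑ k, i k) * ∏ k : Fin (j + 1), (z k) ^ (i k)

/-- The one-dimensional Volterra kernel in closed form (index `m` stands for time `-m`). -/
noncomputable def volterraKernel1 (lam τ : ℝ) (z z' : ℕ → ℝ) : ℝ :=
  1 + ∑' k : ℕ, lam ^ (2 * k + 2) *
    ∏ m ∈ Finset.range (k + 1), (1 - τ ^ 2 * z m * z' m)⁻¹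

set_option maxHeartbeats 1000000 in
/-- Product of finitely many absolutely convergent series, summed over all multi-indices. -/
lemma prod_geom_hasSum {n : ℕ} (g : Fin n → ℕ → ℝ) (hg : ∀ k, Summable fun i => |g k i|) :
    Summable (fun f : Fin n → ℕ => |∏ k, g k (f k)|) ∧
    HasSum (fun f : Fin n → ℕ => ∏ k, g k (f k)) (∏ k, ∑' i, g k i) := by
  induction n with
  | zero =>
      constructor
      · exact (hasSum_unique (fun f : Fin 0 → ℕ => |∏ k, g k (f k)|)).summable
      · simpa using hasSum_unique (fun f : Fin 0 → ℕ => ∏ k, g k (f k))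
  | succ n ih =>
      obtain ⟨ihS, ihH⟩ := ih (fun k => g k.succ) (fun k => hg k.succ)
      have h0 : Summable fun i => ‖g 0 i‖ := by
        simp only [Real.norm_eq_abs]; exact hg 0
      have hP : Summable fun f : Fin n → ℕ => ‖∏ k : Fin n, g k.succ (f k)‖ := by
        simp only [Real.norm_eq_abs]; exact ihS
      have hmul : Summable (fun p : ℕ × (Fin n → ℕ) =>
          g 0 p.1 * ∏ k : Fin n, g k.succ (p.2 k)) := by
        apply summable_mul_of_summable_norm h0 hP
      have hmulabs : Summable (fun p : ℕ × (Fin n → ℕ) =>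
          |g 0 p.1 * ∏ k : Fin n, g k.succ (p.2 k)|) := by
        have h1 : Summable fun i : ℕ => ‖|g 0 i|‖ := by
          simp only [Real.norm_eq_abs, abs_abs]; exact hg 0
        have h2 : Summable fun f : Fin n → ℕ => ‖|∏ k : Fin n, g k.succ (f k)|‖ := by
          simp only [Real.norm_eq_abs, abs_abs]; exact ihS
        have h3 : Summable (fun p : ℕ × (Fin n → ℕ) =>
            |g 0 p.1| * |∏ k : Fin n, g k.succ (p.2 k)|) := by
          apply summable_mul_of_summable_norm h1 h2
        refine h3.congr fun p => ?_
        rw [abs_mul]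
      have hH : HasSum (fun p : ℕ × (Fin n → ℕ) =>
          g 0 p.1 * ∏ k : Fin n, g k.succ (p.2 k))
          ((∑' i, g 0 i) * ∏ k : Fin n, ∑' i, g k.succ i) := by
        apply HasSum.mul ((hg 0).of_abs.hasSum) ihH hmul
      -- transport along the equivalence (Fin (n+1) → ℕ) ≃ ℕ × (Fin n → ℕ)
      set e : (Fin (n + 1) → ℕ) ≃ ℕ × (Fin n → ℕ) :=
        { toFun := fun f => (f 0, fun k => f k.succ)
          invFun := fun p => Fin.cons p.1 p.2
          left_inv := fun f => by
            funext k
            exact Fin.cases rfl (fun k => rfl) k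
          right_inv := fun p => rfl }
      have hcomp : ∀ f : Fin (n + 1) → ℕ,
          (fun p : ℕ × (Fin n → ℕ) => g 0 p.1 * ∏ k : Fin n, g k.succ (p.2 k)) (e f)
            = ∏ k, g k (f k) := by
        intro f
        simp [e, Fin.prod_univ_succ]; rfl
      constructor
      · have := (e.summable_iff (f := fun p : ℕ × (Fin n → ℕ) =>
          |g 0 p.1 * ∏ k : Fin n, g k.succ (p.2 k)|)).mpr hmulabs
        refine this.congr fun f => ?_
        exact congrArg abs (hcomp f)
      · have := (e.hasSum_iff (f := fun p : ℕ × (Fin n → ℕ) =>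
          g 0 p.1 * ∏ k : Fin n, g k.succ (p.2 k))
          (a := (∑' i, g 0 i) * ∏ k : Fin n, ∑' i, g k.succ i)).mpr hH
        rw [Fin.prod_univ_succ]
        refine HasSum.congr_fun this fun f => (hcomp f).symm

lemma feat_mul (lam τ : ℝ) (j : ℕ) (i : Fin (j + 1) → ℕ) (z z' : ℕ → ℝ) :
    volterraFeature lam τ j i z * volterraFeature lam τ j i z' =
    lam ^ (2 * j + 2) * ∏ k : Fin (j + 1), (τ ^ 2 * z k * z' k) ^ (i k) := by
  have h : (∏ k : Fin (j + 1), (τ ^ 2 * z k * z' k) ^ (i k)) =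
      (τ ^ (∑ k, i k) * τ ^ (∑ k, i k)) *
        ((∏ k : Fin (j + 1), (z k) ^ (i k)) * (∏ k : Fin (j + 1), (z' k) ^ (i k))) := by
    rw [← Finset.prod_pow_eq_pow_sum, ← Finset.prod_mul_distrib, ← Finset.prod_mul_distrib,
      ← Finset.prod_mul_distrib]
    exact Finset.prod_congr rfl fun k _ => by ring
  simp only [volterraFeature]
  rw [h, show 2 * j + 2 = (j + 1) + (j + 1) by ring, pow_add]
  ring

/-- For `d = 1`, `M > 0`, `τ²M² < 1`, `0 < λ < √(1-τ²M²)`, the Volterra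
kernel admits the absolutely convergent feature expansion
`K(z,z') = 1 + Σ_j Σ_{i₀,…,i_j ≥ 0} φ_{j,i₀,…,i_j}(z) φ_{j,i₀,…,i_j}(z')` on `K_M`. -/
theorem volterra_kernel_feature_expansion (M τ lam : ℝ)
    (hM : 0 < M) (hτ : 0 < τ) (hτM : τ ^ 2 * M ^ 2 < 1)
    (hlam0 : 0 < lam) (hlam : lam < Real.sqrt (1 - τ ^ 2 * M ^ 2))
    (z z' : ℕ → ℝ) (hz : ∀ k, |z k| ≤ M) (hz' : ∀ k, |z' k| ≤ M) :
    Summable (fun p : Σ j : ℕ, (Fin (j + 1) → ℕ) =>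
      |volterraFeature lam τ p.1 p.2 z * volterraFeature lam τ p.1 p.2 z'|) ∧
    volterraKernel1 lam τ z z' =
      1 + ∑' p : Σ j : ℕ, (Fin (j + 1) → ℕ),
        volterraFeature lam τ p.1 p.2 z * volterraFeature lam τ p.1 p.2 z' := by
  have h1b : 0 < 1 - τ ^ 2 * M ^ 2 := by linarith
  have habs : ∀ k : ℕ, |τ ^ 2 * z k * z' k| ≤ τ ^ 2 * M ^ 2 := by
    intro k
    rw [abs_mul, abs_mul, abs_pow, abs_of_pos hτ]
    have h1 := hz k; have h2 := hz' k
    have h3 := abs_nonneg (z k); have h4 := abs_nonneg (z' k)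
    have h5 : |z k| * |z' k| ≤ M * M := mul_le_mul h1 h2 h4 (le_of_lt hM)
    nlinarith [sq_nonneg τ, h5]
  have hx : ∀ k : ℕ, |τ ^ 2 * z k * z' k| < 1 := fun k => lt_of_le_of_lt (habs k) hτM
  have hgeoabs : ∀ k : ℕ, Summable (fun i : ℕ => |(τ ^ 2 * z k * z' k) ^ i|) := by
    intro k
    simpa [abs_pow] using summable_geometric_of_lt_one (abs_nonneg _) (hx k)
  have hlam2 : lam ^ 2 < 1 - τ ^ 2 * M ^ 2 := by
    have h := Real.sq_sqrt (le_of_lt h1b)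
    nlinarith [Real.sqrt_nonneg (1 - τ ^ 2 * M ^ 2)]
  set c : ℝ := lam ^ 2 * (1 - τ ^ 2 * M ^ 2)⁻¹ with hc
  have hc0 : 0 ≤ c := by positivity
  have hc1 : c < 1 := by
    rw [hc, show lam ^ 2 * (1 - τ ^ 2 * M ^ 2)⁻¹ = lam ^ 2 / (1 - τ ^ 2 * M ^ 2) from
      (div_eq_mul_inv _ _).symm, div_lt_one h1b]
    exact hlam2
  have hfac : ∀ k : ℕ, (1 - |τ ^ 2 * z k * z' k|)⁻¹ ≤ (1 - τ ^ 2 * M ^ 2)⁻¹ := by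
    intro k
    apply inv_anti₀ h1b
    linarith [habs k]
  -- the key per-level facts
  have key : ∀ j : ℕ,
      Summable (fun i : Fin (j + 1) → ℕ =>
        |volterraFeature lam τ j i z * volterraFeature lam τ j i z'|) ∧
      HasSum (fun i : Fin (j + 1) → ℕ =>
        volterraFeature lam τ j i z * volterraFeature lam τ j i z')
        (lam ^ (2 * j + 2) * ∏ m ∈ Finset.range (j + 1), (1 - τ ^ 2 * z m * z' m)⁻¹) ∧
      (∑' i : Fin (j + 1) → ℕ,
        |volterraFeature lam τ j i z * volterraFeature lam τ j i z'|) ≤ c ^ (j + 1) := by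
    intro j
    obtain ⟨hS, hH⟩ := prod_geom_hasSum
      (fun k : Fin (j + 1) => fun i => (τ ^ 2 * z k * z' k) ^ i) (fun k => hgeoabs k)
    obtain ⟨hS', hH'⟩ := prod_geom_hasSum
      (fun k : Fin (j + 1) => fun i => |τ ^ 2 * z k * z' k| ^ i)
      (fun k => by simpa [abs_abs, abs_pow] using hgeoabs (k : ℕ))
    have hlp : (0:ℝ) < lam ^ (2 * j + 2) := pow_pos hlam0 _
    have hphi : ∀ i : Fin (j + 1) → ℕ,
        volterraFeature lam τ j i z * volterraFeature lam τ j i z' =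
          lam ^ (2 * j + 2) * ∏ k : Fin (j + 1), (τ ^ 2 * z k * z' k) ^ (i k) :=
      fun i => feat_mul lam τ j i z z'
    have habsphi : ∀ i : Fin (j + 1) → ℕ,
        |volterraFeature lam τ j i z * volterraFeature lam τ j i z'| =
          lam ^ (2 * j + 2) * ∏ k : Fin (j + 1), |τ ^ 2 * z k * z' k| ^ (i k) := by
      intro i
      rw [hphi i, abs_mul, abs_of_pos hlp, Finset.abs_prod]
      congr 1
      exact Finset.prod_congr rfl fun k _ => abs_pow _ _
    have hHabs : HasSum (fun i : Fin (j + 1) → ℕ =>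
        |volterraFeature lam τ j i z * volterraFeature lam τ j i z'|)
        (lam ^ (2 * j + 2) * ∏ k : Fin (j + 1), ∑' i : ℕ, |τ ^ 2 * z k * z' k| ^ i) :=
      HasSum.congr_fun (hH'.mul_left _) fun i => habsphi i
    refine ⟨hHabs.summable.abs.congr (fun i => abs_abs _), ?_, ?_⟩
    · have hprod : (∏ k : Fin (j + 1), ∑' i : ℕ, (τ ^ 2 * z k * z' k) ^ i) =
          ∏ m ∈ Finset.range (j + 1), (1 - τ ^ 2 * z m * z' m)⁻¹ := by
        rw [show (∏ k : Fin (j + 1), ∑' i : ℕ, (τ ^ 2 * z k * z' k) ^ i) =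
            ∏ k : Fin (j + 1), (1 - τ ^ 2 * z k * z' k)⁻¹ from
          Finset.prod_congr rfl fun k _ => tsum_geometric_of_abs_lt_one (hx k)]
        exact Fin.prod_univ_eq_prod_range (fun m => (1 - τ ^ 2 * z m * z' m)⁻¹) (j + 1)
      rw [← hprod]
      exact HasSum.congr_fun (hH.mul_left _) fun i => hphi i
    · rw [hHabs.tsum_eq]
      have hsum_eq : ∀ k : ℕ, (∑' i : ℕ, |τ ^ 2 * z k * z' k| ^ i) =
          (1 - |τ ^ 2 * z k * z' k|)⁻¹ := fun k =>
        tsum_geometric_of_lt_one (abs_nonneg _) (hx k)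
      calc lam ^ (2 * j + 2) * ∏ k : Fin (j + 1), ∑' i : ℕ, |τ ^ 2 * z k * z' k| ^ i
          ≤ lam ^ (2 * j + 2) * ∏ k : Fin (j + 1), (1 - τ ^ 2 * M ^ 2)⁻¹ := by
            apply mul_le_mul_of_nonneg_left _ (le_of_lt hlp)
            apply Finset.prod_le_prod
            · intro k _
              exact tsum_nonneg fun i => pow_nonneg (abs_nonneg _) _
            · intro k _
              rw [hsum_eq k]
              exact hfac k
        _ = c ^ (j + 1) := by
            rw [Finset.prod_const, Finset.card_univ, Fintype.card_fin, hc, mul_pow,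
              ← pow_mul, show 2 * (j + 1) = 2 * j + 2 by ring]
  have hsum : Summable (fun p : Σ j : ℕ, (Fin (j + 1) → ℕ) =>
      |volterraFeature lam τ p.1 p.2 z * volterraFeature lam τ p.1 p.2 z'|) := by
    rw [summable_sigma_of_nonneg (fun p => abs_nonneg _)]
    refine ⟨fun j => (key j).1, ?_⟩
    apply Summable.of_nonneg_of_le (fun j => tsum_nonneg fun i => abs_nonneg _)
      (fun j => (key j).2.2)
    exact ((summable_geometric_of_lt_one hc0 hc1).mul_right c).congr
      fun j => (pow_succ c j).symm
  refine ⟨hsum, ?_⟩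
  rw [volterraKernel1]
  congr 1
  rw [Summable.tsum_sigma hsum.of_abs]
  exact tsum_congr fun j => ((key j).2.1).tsum_eq.symm
end

section
/- Let (X, ‖·‖) be a complete metric space of states, Z a set of inputs, and F: X × Z → X a map that is a uniform contraction in the state variable: there is 0 ≤ c < 1 with ‖F(x, z) − F(y, z)‖ ≤ c‖x − y‖ for all z ∈ Z. Then F has the echo state property: for every input sequence z ∈ Z^{Z_-} there exists a unique bounded sequence x ∈ X^{Z_-} (bounded meaning contained in some fixed bounded set determined by F) with x_t = F(x_{t−1}, z_t) for all t ∈ Z_-, provided sup_{z ∈ Z} ‖F(x_0, z) − x_0‖ < ∞ for some x_0 ∈ X. -/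
/-- Echo state property of uniform state contractions.  Let `X` be a
complete normed space of states, `Z` a set of inputs, and `F : X × Z → X` a uniform
contraction in the state variable with constant `c < 1`, such that
`sup_z ‖F(x₀, z) - x₀‖ < ∞` for some `x₀`.  Then `F` has the echo state property: for
every semi-infinite input sequence (indexed by depth, index `n` standing for time `-n`)
there is a unique bounded state sequence solving `x_t = F(x_{t-1}, z_t)` for all `t ≤ 0`,
i.e. `x n = F (x (n+1)) (z n)` for all `n`. -/
theorem echo_state_property_of_contraction
    (X : Type*) [NormedAddCommGroup X] [CompleteSpace X] (Z : Type*)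
    (F : X → Z → X) (c : ℝ) (hc0 : 0 ≤ c) (hc1 : c < 1)
    (hcontr : ∀ (z : Z) (x y : X), ‖F x z - F y z‖ ≤ c * ‖x - y‖)
    (hbdd : ∃ (x₀ : X) (C : ℝ), ∀ z : Z, ‖F x₀ z - x₀‖ ≤ C) :
    ∀ z : ℕ → Z, ∃! x : ℕ → X,
      (∃ B : ℝ, ∀ n, ‖x n‖ ≤ B) ∧ (∀ n, x n = F (x (n + 1)) (z n)) := by
  obtain ⟨x₀, C, hC⟩ := hbdd
  intro z
  have hC0 : 0 ≤ C := le_trans (norm_nonneg _) (hC (z 0))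
  -- finite-depth approximations
  set g : ℕ → ℕ → X := fun m => Nat.rec (fun _ => x₀) (fun _ gm n => F (gm (n+1)) (z n)) m
    with hg
  have gs : ∀ m n, g (m+1) n = F (g m (n+1)) (z n) := fun m n => rfl
  have key : ∀ m n, ‖g (m+1) n - g m n‖ ≤ c ^ m * C := by
    intro m
    induction m with
    | zero => intro n; show ‖F x₀ (z n) - x₀‖ ≤ c ^ 0 * C; simpa using hC (z n)
    | succ m ih =>
      intro n
      have h1 : ‖g (m+2) n - g (m+1) n‖ ≤ c * ‖g (m+1) (n+1) - g m (n+1)‖ := by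
        rw [gs, gs]; exact hcontr _ _ _
      have h2 := ih (n+1)
      calc ‖g (m+2) n - g (m+1) n‖ ≤ c * ‖g (m+1) (n+1) - g m (n+1)‖ := h1
        _ ≤ c * (c ^ m * C) := by
          exact mul_le_mul_of_nonneg_left h2 hc0
        _ = c ^ (m+1) * C := by ring
  have hcauchy : ∀ n, CauchySeq (fun m => g m n) := by
    intro n
    apply cauchySeq_of_le_geometric c C hc1
    intro m
    rw [dist_eq_norm, norm_sub_rev]
    calc ‖g (m+1) n - g m n‖ ≤ c ^ m * C := key m n
      _ = C * c ^ m := mul_comm _ _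
  choose x hx using fun n => cauchySeq_tendsto_of_complete (hcauchy n)
  -- uniform bound on approximations
  have hD : 0 ≤ C / (1 - c) := div_nonneg hC0 (by linarith)
  have gbound : ∀ m n, ‖g m n - x₀‖ ≤ C / (1 - c) := by
    intro m
    induction m with
    | zero => intro n; show ‖x₀ - x₀‖ ≤ C / (1 - c); simpa using hD
    | succ m ih =>
      intro n
      have h1 : ‖g (m+1) n - x₀‖ ≤ ‖F (g m (n+1)) (z n) - F x₀ (z n)‖ + ‖F x₀ (z n) - x₀‖ := by
        rw [gs]; exact norm_sub_le_norm_sub_add_norm_sub _ _ _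
      have h2 : ‖F (g m (n+1)) (z n) - F x₀ (z n)‖ ≤ c * (C / (1 - c)) :=
        le_trans (hcontr _ _ _) (mul_le_mul_of_nonneg_left (ih (n+1)) hc0)
      have h3 := hC (z n)
      have h4 : (1:ℝ) - c ≠ 0 := by linarith
      have : c * (C / (1 - c)) + C = C / (1 - c) := by field_simp; ring
      linarith
  have xbound : ∀ n, ‖x n‖ ≤ ‖x₀‖ + C / (1 - c) := by
    intro n
    have hlim : Filter.Tendsto (fun m => ‖g m n - x₀‖) Filter.atTop (nhds ‖x n - x₀‖) :=
      (Filter.Tendsto.sub (hx n) tendsto_const_nhds).norm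
    have : ‖x n - x₀‖ ≤ C / (1 - c) := le_of_tendsto hlim (Filter.Eventually.of_forall fun m => gbound m n)
    calc ‖x n‖ = ‖x n - x₀ + x₀‖ := by rw [sub_add_cancel]
      _ ≤ ‖x n - x₀‖ + ‖x₀‖ := norm_add_le _ _
      _ ≤ ‖x₀‖ + C / (1 - c) := by linarith
  -- the recursion holds in the limit
  have hrec : ∀ n, x n = F (x (n+1)) (z n) := by
    intro n
    have h1 : Filter.Tendsto (fun m => g (m+1) n) Filter.atTop (nhds (x n)) :=
      (hx n).comp (Filter.tendsto_add_atTop_nat 1)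
    have h2 : Filter.Tendsto (fun m => F (g m (n+1)) (z n)) Filter.atTop (nhds (F (x (n+1)) (z n))) := by
      have hlip : LipschitzWith (Real.toNNReal c) (fun y => F y (z n)) := by
        apply LipschitzWith.of_dist_le_mul
        intro a b
        rw [dist_eq_norm, dist_eq_norm]
        simpa [Real.coe_toNNReal c hc0] using hcontr (z n) a b
      exact (hlip.continuous.tendsto _).comp (hx (n+1))
    have heq : (fun m => g (m+1) n) = fun m => F (g m (n+1)) (z n) := by
      funext m; exact gs m n
    rw [heq] at h1
    exact tendsto_nhds_unique h1 h2
  refine ⟨x, ⟨⟨‖x₀‖ + C / (1 - c), xbound⟩, hrec⟩, ?_⟩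
  -- uniqueness
  rintro y ⟨⟨By, hBy⟩, hyrec⟩
  funext n
  have hM : ∀ k n, ‖y n - x n‖ ≤ c ^ k * (By + (‖x₀‖ + C / (1 - c))) := by
    intro k
    induction k with
    | zero =>
      intro n
      simp only [pow_zero, one_mul]
      calc ‖y n - x n‖ ≤ ‖y n‖ + ‖x n‖ := norm_sub_le _ _
        _ ≤ By + (‖x₀‖ + C / (1 - c)) := add_le_add (hBy n) (xbound n)
    | succ k ih =>
      intro n
      have h1 : ‖y n - x n‖ ≤ c * ‖y (n+1) - x (n+1)‖ := by
        rw [hyrec n, hrec n]; exact hcontr _ _ _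
      calc ‖y n - x n‖ ≤ c * ‖y (n+1) - x (n+1)‖ := h1
        _ ≤ c * (c ^ k * (By + (‖x₀‖ + C / (1 - c)))) :=
          mul_le_mul_of_nonneg_left (ih (n+1)) hc0
        _ = c ^ (k+1) * (By + (‖x₀‖ + C / (1 - c))) := by ring
  have hzero : ‖y n - x n‖ ≤ 0 := by
    have htend : Filter.Tendsto (fun k => c ^ k * (By + (‖x₀‖ + C / (1 - c)))) Filter.atTop (nhds 0) := by
      simpa using (tendsto_pow_atTop_nhds_zero_of_lt_one hc0 hc1).mul_const _
    exact ge_of_tendsto htend (Filter.Eventually.of_forall fun k => hM k n)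
  have : y n - x n = 0 := norm_le_zero_iff.mp hzero
  exact sub_eq_zero.mp this
end

section
/- Let F, X, Z be as above with F a uniform state contraction with constant c < 1, and assume F(·, z) is continuous for each z and Z is a compact metric space with F jointly continuous. Then the associated state functional H: Z^{Z_-} → X (assigning to each input its unique bounded solution evaluated at time 0) is continuous when Z^{Z_-} carries the product topology; i.e., the reservoir filter has the fading memory property. -/
/-- Fading memory property of contractive reservoir functionals.  Let `X`
be a complete normed space of states, `Z` a compact metric space of inputs, and
`F : X × Z → X` jointly continuous and a uniform contraction in the state variable with
constant `c < 1`.  Let `Hst` be the associated state functional: `Hst z = x 0` where `x`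
is the unique bounded solution of the state recursion `x_t = F(x_{t-1}, z_t)` (sequences
indexed by depth: index `n` stands for time `-n`).  Then `Hst` is continuous for the
product topology on `Z^{ℤ₋}`, i.e. the reservoir filter has the fading memory property. -/
theorem fading_memory_of_contraction
    (X : Type*) [NormedAddCommGroup X] [CompleteSpace X]
    (Z : Type*) [MetricSpace Z] [CompactSpace Z]
    (F : X → Z → X) (c : ℝ) (hc0 : 0 ≤ c) (hc1 : c < 1)
    (hF : Continuous (fun p : X × Z => F p.1 p.2))
    (hcontr : ∀ (z : Z) (x y : X), ‖F x z - F y z‖ ≤ c * ‖x - y‖)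
    (Hst : (ℕ → Z) → X)
    (hHst : ∀ z : ℕ → Z, ∃ x : ℕ → X,
      (∃ B : ℝ, ∀ n, ‖x n‖ ≤ B) ∧ (∀ n, x n = F (x (n + 1)) (z n)) ∧ Hst z = x 0) :
    Continuous Hst := by
  have h1c : (0:ℝ) < 1 - c := by linarith
  -- A bound M on ‖F 0 z‖ over the compact space Z
  obtain ⟨M₀, hM₀⟩ : BddAbove (Set.range fun z : Z => ‖F 0 z‖) :=
    (isCompact_range ((hF.comp (continuous_const.prodMk continuous_id)).norm)).bddAbove
  set M : ℝ := max M₀ 0 with hMdef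
  have hM : ∀ z : Z, ‖F 0 z‖ ≤ M := fun z =>
    le_trans (hM₀ ⟨z, rfl⟩) (le_max_left _ _)
  have hM0 : (0:ℝ) ≤ M := le_max_right _ _
  set R : ℝ := M / (1 - c) with hRdef
  have hR0 : 0 ≤ R := div_nonneg hM0 h1c.le
  -- uniform bound on bounded solutions
  have hbound : ∀ (z : ℕ → Z) (x : ℕ → X), (∀ n, x n = F (x (n + 1)) (z n)) →
      (∃ B : ℝ, ∀ n, ‖x n‖ ≤ B) → ∀ n, ‖x n‖ ≤ R := by
    intro z x hx ⟨B, hB⟩ n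
    have step : ∀ m, ‖x m‖ ≤ c * ‖x (m + 1)‖ + M := by
      intro m
      calc ‖x m‖ = ‖(F (x (m+1)) (z m) - F 0 (z m)) + F 0 (z m)‖ := by rw [sub_add_cancel, ← hx m]
        _ ≤ ‖F (x (m+1)) (z m) - F 0 (z m)‖ + ‖F 0 (z m)‖ := norm_add_le _ _
        _ ≤ c * ‖x (m+1) - 0‖ + M := add_le_add (hcontr _ _ _) (hM _)
        _ = c * ‖x (m+1)‖ + M := by rw [sub_zero]
    have iter : ∀ k, ‖x n‖ ≤ c ^ k * B + R := by
      intro k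
      induction k generalizing n with
      | zero =>
        simp only [pow_zero, one_mul]
        exact le_add_of_le_of_nonneg (hB n) hR0
      | succ k ih =>
        have h2 := step n
        have h3 := ih (n + 1)
        have hcR : c * R + M = R := by
          rw [hRdef]
          field_simp
          ring
        calc ‖x n‖ ≤ c * ‖x (n+1)‖ + M := h2
          _ ≤ c * (c ^ k * B + R) + M := by nlinarith
          _ = c ^ (k+1) * B + (c * R + M) := by ring
          _ = c ^ (k+1) * B + R := by rw [hcR]
    have hlim : Filter.Tendsto (fun k => c ^ k * B + R) Filter.atTop (nhds (0 * B + R)) :=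
      (((tendsto_pow_atTop_nhds_zero_of_lt_one hc0 hc1).mul_const B).add_const R)
    have := ge_of_tendsto hlim (Filter.Eventually.of_forall iter)
    simpa using this
  -- key comparison inequality
  have key : ∀ (z z' : ℕ → Z) (x x' : ℕ → X), (∀ n, x n = F (x (n + 1)) (z n)) →
      (∀ n, x' n = F (x' (n + 1)) (z' n)) → ∀ N,
      ‖x 0 - x' 0‖ ≤ (∑ n ∈ Finset.range N,
        c ^ n * ‖F (x' (n + 1)) (z n) - F (x' (n + 1)) (z' n)‖) + c ^ N * ‖x N - x' N‖ := by
    intro z z' x x' hx hx' N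
    induction N with
    | zero => simp
    | succ N ih =>
      have hstep : ‖x N - x' N‖ ≤ c * ‖x (N+1) - x' (N+1)‖ +
          ‖F (x' (N + 1)) (z N) - F (x' (N + 1)) (z' N)‖ := by
        calc ‖x N - x' N‖
            = ‖(F (x (N+1)) (z N) - F (x' (N+1)) (z N)) +
              (F (x' (N+1)) (z N) - F (x' (N+1)) (z' N))‖ := by
              rw [sub_add_sub_cancel, hx N, hx' N]
          _ ≤ ‖F (x (N+1)) (z N) - F (x' (N+1)) (z N)‖ +
              ‖F (x' (N+1)) (z N) - F (x' (N+1)) (z' N)‖ := norm_add_le _ _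
          _ ≤ c * ‖x (N+1) - x' (N+1)‖ +
              ‖F (x' (N+1)) (z N) - F (x' (N+1)) (z' N)‖ :=
              add_le_add_left (hcontr _ _ _) _
      have hcN : (0:ℝ) ≤ c ^ N := pow_nonneg hc0 N
      rw [Finset.sum_range_succ]
      calc ‖x 0 - x' 0‖
          ≤ (∑ n ∈ Finset.range N,
              c ^ n * ‖F (x' (n + 1)) (z n) - F (x' (n + 1)) (z' n)‖) +
              c ^ N * ‖x N - x' N‖ := ih
        _ ≤ (∑ n ∈ Finset.range N,
              c ^ n * ‖F (x' (n + 1)) (z n) - F (x' (n + 1)) (z' n)‖) +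
              c ^ N * (c * ‖x (N+1) - x' (N+1)‖ +
                ‖F (x' (N + 1)) (z N) - F (x' (N + 1)) (z' N)‖) := by
            gcongr
        _ = (∑ n ∈ Finset.range N,
              c ^ n * ‖F (x' (n + 1)) (z n) - F (x' (n + 1)) (z' n)‖) +
              c ^ N * ‖F (x' (N + 1)) (z N) - F (x' (N + 1)) (z' N)‖ +
              c ^ (N+1) * ‖x (N+1) - x' (N+1)‖ := by ring
  -- continuity
  rw [continuous_iff_continuousAt]
  intro z₀
  obtain ⟨x₀, hx₀b, hx₀, hx₀0⟩ := hHst z₀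
  rw [ContinuousAt, Metric.tendsto_nhds]
  intro ε hε
  -- choose N with c^N * (2R) < ε/2
  obtain ⟨N, hN⟩ : ∃ N, c ^ N * (2 * R) < ε / 2 := by
    have h : Filter.Tendsto (fun k => c ^ k * (2 * R)) Filter.atTop (nhds 0) := by
      simpa using (tendsto_pow_atTop_nhds_zero_of_lt_one hc0 hc1).mul_const (2 * R)
    exact (h.eventually_lt_const (half_pos hε)).exists
  set ε' : ℝ := ε / (2 * (N + 1)) with hε'def
  have hN1 : (0:ℝ) < (N:ℝ) + 1 := by positivity
  have hε' : 0 < ε' := by positivity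
  have hNε' : (N:ℝ) * ε' < ε / 2 := by
    have h2 : ((N:ℝ) + 1) * ε' = ε / 2 := by
      rw [hε'def]
      field_simp
    nlinarith
  -- the neighborhood condition: for each n < N, F (x₀ (n+1)) (z n) close to F (x₀ (n+1)) (z₀ n)
  have hnbhd : ∀ᶠ z in nhds z₀, ∀ n ∈ Finset.range N,
      ‖F (x₀ (n + 1)) (z n) - F (x₀ (n + 1)) (z₀ n)‖ < ε' := by
    rw [Filter.eventually_all_finset]
    intro n _
    have hcont : Continuous fun z : ℕ → Z => ‖F (x₀ (n + 1)) (z n) - F (x₀ (n + 1)) (z₀ n)‖ := by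
      apply Continuous.norm
      apply Continuous.sub _ continuous_const
      exact hF.comp (continuous_const.prodMk (continuous_apply n))
    have h0 : ‖F (x₀ (n + 1)) (z₀ n) - F (x₀ (n + 1)) (z₀ n)‖ < ε' := by
      simpa using hε'
    exact (hcont.continuousAt).eventually_lt continuousAt_const h0
  filter_upwards [hnbhd] with z hz
  obtain ⟨x, hxb, hx, hxz⟩ := hHst z
  rw [dist_eq_norm, hxz, hx₀0]
  have hRx := hbound z x hx hxb
  have hRx₀ := hbound z₀ x₀ hx₀ hx₀b
  have hsum : (∑ n ∈ Finset.range N,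
      c ^ n * ‖F (x₀ (n + 1)) (z n) - F (x₀ (n + 1)) (z₀ n)‖) ≤ (N:ℝ) * ε' := by
    calc (∑ n ∈ Finset.range N, c ^ n * ‖F (x₀ (n + 1)) (z n) - F (x₀ (n + 1)) (z₀ n)‖)
        ≤ ∑ _n ∈ Finset.range N, ε' := by
          apply Finset.sum_le_sum
          intro n hn
          have h1 : c ^ n ≤ 1 := pow_le_one₀ hc0 hc1.le
          have h2 : (0:ℝ) ≤ ‖F (x₀ (n + 1)) (z n) - F (x₀ (n + 1)) (z₀ n)‖ := norm_nonneg _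
          nlinarith [hz n hn]
      _ = (N:ℝ) * ε' := by simp [mul_comm]
  have hdiff : ‖x N - x₀ N‖ ≤ 2 * R := by
    calc ‖x N - x₀ N‖ ≤ ‖x N‖ + ‖x₀ N‖ := norm_sub_le _ _
      _ ≤ 2 * R := by linarith [hRx N, hRx₀ N]
  have hcN : (0:ℝ) ≤ c ^ N := pow_nonneg hc0 N
  calc ‖x 0 - x₀ 0‖
      ≤ (∑ n ∈ Finset.range N,
          c ^ n * ‖F (x₀ (n + 1)) (z n) - F (x₀ (n + 1)) (z₀ n)‖) + c ^ N * ‖x N - x₀ N‖ :=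
        key z z₀ x x₀ hx hx₀ N
    _ ≤ (N:ℝ) * ε' + c ^ N * (2 * R) := by gcongr
    _ < ε / 2 + ε / 2 := by gcongr
    _ = ε := by ring
end
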